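/- For λ in the Gårding cone Γ_k and integers n ≥ k > l ≥ 0, the partial derivative ∂/∂λ_i [σ_k(λ)/σ_l(λ)] is strictly positive for every 1 ≤ i ≤ n. -/

import Mathlib

/-- The `j`-th elementary symmetric polynomial of `lam ∈ ℝ^n`. -/
def esymm (n j : ℕ) (lam : Fin n → ℝ) : ℝ :=
  ∑ s ∈ Finset.univ.powersetCard j, ∏ i ∈ s, lam i

/-- The Gårding cone `Γ_k = {λ ∈ ℝ^n : σ_i(λ) > 0, 1 ≤ i ≤ k}`. -/
def gardingCone (n k : ℕ) : Set (Fin n → ℝ) :=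
  {lam | ∀ i : ℕ, 1 ≤ i → i ≤ k → 0 < esymm n i lam}

open Finset

namespace NewtonAux

set_option linter.unusedSectionVars false

variable {α : Type*} [DecidableEq α]

/-- elementary symmetric function of `f` over a finset `A`. -/
def esf (f : α → ℝ) (A : Finset α) (j : ℕ) : ℝ :=
  ∑ s ∈ A.powersetCard j, ∏ i ∈ s, f i

lemma esf_zero (f : α → ℝ) (A : Finset α) : esf f A 0 = 1 := by
  simp [esf]

lemma esf_card (f : α → ℝ) (A : Finset α) : esf f A A.card = ∏ i ∈ A, f i := by
  simp [esf, Finset.powersetCard_self]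

lemma esf_of_gt {f : α → ℝ} {A : Finset α} {j : ℕ} (h : A.card < j) : esf f A j = 0 := by
  rw [esf, Finset.powersetCard_eq_empty.2 h, Finset.sum_empty]

lemma esf_insert (f : α → ℝ) {B : Finset α} {x : α} (hx : x ∉ B) (j : ℕ) :
    esf f (insert x B) (j + 1) = esf f B (j + 1) + f x * esf f B j := by
  rw [esf, Finset.powersetCard_succ_insert hx]
  rw [Finset.sum_union, Finset.sum_image]
  · have : ∀ s ∈ B.powersetCard j, ∏ y ∈ insert x s, f y = f x * ∏ y ∈ s, f y := by
      intro s hs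
      have : x ∉ s := fun hmem => hx ((Finset.mem_powersetCard.1 hs).1 hmem)
      rw [Finset.prod_insert this]
    rw [Finset.sum_congr rfl this, ← Finset.mul_sum]
    rfl
  · intro s hs t ht hst
    have hi1 : x ∉ s := fun hmem => hx ((Finset.mem_powersetCard.1 hs).1 hmem)
    have hi2 : x ∉ t := fun hmem => hx ((Finset.mem_powersetCard.1 ht).1 hmem)
    have := congrArg (fun u => Finset.erase u x) hst
    simpa [Finset.erase_insert hi1, Finset.erase_insert hi2] using this
  · rw [Finset.disjoint_left]
    intro s hs hs'
    obtain ⟨t, ht, rfl⟩ := Finset.mem_image.1 hs'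
    have : insert x t ⊆ B := (Finset.mem_powersetCard.1 hs).1
    exact hx (this (Finset.mem_insert_self x t))

lemma esf_succ_of_mem (f : α → ℝ) {A : Finset α} {i : α} (hi : i ∈ A) (j : ℕ) :
    esf f A (j + 1) = esf f (A.erase i) (j + 1) + f i * esf f (A.erase i) j := by
  conv_lhs => rw [← Finset.insert_erase hi]
  exact esf_insert f (Finset.notMem_erase _ _) j

lemma esf_congr {f g : α → ℝ} {A : Finset α} (h : ∀ x ∈ A, f x = g x) (j : ℕ) :
    esf f A j = esf g A j := by
  refine Finset.sum_congr rfl fun s hs => Finset.prod_congr rfl fun x hx => ?_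
  exact h x ((Finset.mem_powersetCard.1 hs).1 hx)

lemma esf_top (f : α → ℝ) (A : Finset α) (hA : A.Nonempty) :
    esf f A (A.card - 1) = ∑ i ∈ A, ∏ j ∈ A.erase i, f j := by
  classical
  induction A using Finset.induction_on with
  | empty => exact absurd hA (by simp)
  | @insert x B hx ih =>
    rcases B.eq_empty_or_nonempty with rfl | hB
    · simp [esf_zero]
    · have hcB : B.card = (B.card - 1) + 1 := (Nat.succ_pred_eq_of_pos (Finset.card_pos.2 hB)).symm
      have hcard : (insert x B).card = B.card + 1 := Finset.card_insert_of_notMem hx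
      have herase : (insert x B).erase x = B := Finset.erase_insert hx
      rw [hcard, Nat.add_sub_cancel, hcB, esf_insert f hx, ← hcB, esf_card, ih hB]
      rw [Finset.sum_insert hx, herase]
      congr 1
      rw [Finset.mul_sum]
      refine Finset.sum_congr rfl fun i hi => ?_
      have hne : x ≠ i := fun h => hx (h ▸ hi)
      rw [show (insert x B).erase i = insert x (B.erase i) from Finset.erase_insert_of_ne hne]
      rw [Finset.prod_insert (fun h => hx (Finset.mem_of_mem_erase h))]

lemma esf_sum_erase (f : α → ℝ) (A : Finset α) (j : ℕ) :
    ∑ i ∈ A, esf f (A.erase i) j = ((A.card - j : ℕ) : ℝ) * esf f A j := by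
  classical
  unfold esf
  rw [Finset.sum_comm' (t := fun i => (A.erase i).powersetCard j)
    (t' := A.powersetCard j) (s' := fun s => A \ s) ?_]
  · rw [Finset.mul_sum]
    refine Finset.sum_congr rfl fun s hs => ?_
    obtain ⟨hsub, hcards⟩ := Finset.mem_powersetCard.1 hs
    rw [Finset.sum_const, Finset.card_sdiff_of_subset hsub, hcards, nsmul_eq_mul]
  · intro i s
    simp only [Finset.mem_powersetCard, Finset.subset_erase, Finset.mem_sdiff]
    constructor
    · rintro ⟨hiA, ⟨hsub, hns⟩, hc⟩; exact ⟨⟨hiA, hns⟩, hsub, hc⟩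
    · rintro ⟨⟨hiA, hns⟩, hsub, hc⟩; exact ⟨hiA, ⟨hsub, hns⟩, hc⟩

end NewtonAux

namespace NewtonAux

lemma top_newton {m k : ℕ} (hk : 1 ≤ k) (hm : m = k + 1) (f : Fin m → ℝ) :
    2 * ((k : ℝ) + 1) * (esf f univ (k - 1) * esf f univ (k + 1)) ≤
      (k : ℝ) * (esf f univ k) ^ 2 := by
  classical
  have hcard : (univ : Finset (Fin m)).card = k + 1 := by simp [hm]
  set a : Fin m → ℝ := fun i => ∏ j ∈ univ.erase i, f j with ha
  have hnonempty : (univ : Finset (Fin m)).Nonempty := by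
    rw [← Finset.card_pos, hcard]; omega
  -- esf at k+1 is the full product
  have htopdeg : esf f univ (k + 1) = ∏ j ∈ univ, f j := by
    rw [← hcard, esf_card]
  -- esf at k is ∑ a i
  have hek : esf f univ k = ∑ i ∈ univ, a i := by
    have := esf_top f (univ : Finset (Fin m)) hnonempty
    rwa [hcard, Nat.add_sub_cancel] at this
  -- erase-card
  have hcarde : ∀ i : Fin m, (univ.erase i).card = k := fun i => by
    rw [Finset.card_erase_of_mem (Finset.mem_univ i), hcard]; omega
  -- key product identity
  have hprod : ∀ i j : Fin m, j ≠ i →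
      a i * a j = (∏ x ∈ univ, f x) * ∏ x ∈ (univ.erase i).erase j, f x := by
    intro i j hij
    have hjmem : j ∈ univ.erase i := Finset.mem_erase.2 ⟨hij, Finset.mem_univ j⟩
    have himem : i ∈ univ.erase j := Finset.mem_erase.2 ⟨Ne.symm hij, Finset.mem_univ i⟩
    have h1 : a i = f j * ∏ x ∈ (univ.erase i).erase j, f x :=
      (Finset.mul_prod_erase _ f hjmem).symm
    have h2 : a j = f i * ∏ x ∈ (univ.erase j).erase i, f x :=
      (Finset.mul_prod_erase _ f himem).symm
    have h3 : ∏ x ∈ univ, f x = f i * a i := (Finset.mul_prod_erase _ f (Finset.mem_univ i)).symm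
    rw [h3, h1, h2, Finset.erase_right_comm]
    ring
  -- sum over erased index of esf at k-1
  have herasetop : ∀ i : Fin m, esf f (univ.erase i) (k - 1) =
      ∑ j ∈ univ.erase i, ∏ x ∈ (univ.erase i).erase j, f x := by
    intro i
    have hne : (univ.erase i).Nonempty := by
      rw [← Finset.card_pos, hcarde]; omega
    have := esf_top f (univ.erase i) hne
    rwa [hcarde] at this
  have hsum2 : ∑ i ∈ univ, esf f (univ.erase i) (k - 1) = 2 * esf f univ (k - 1) := by
    rw [esf_sum_erase, hcard]
    have : k + 1 - (k - 1) = 2 := by omega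
    rw [this]; norm_num
  -- expansion of (∑ a)²
  have hexp : (∑ i ∈ univ, a i) ^ 2 =
      (∑ i ∈ univ, (a i) ^ 2) + esf f univ (k + 1) * (2 * esf f univ (k - 1)) := by
    calc (∑ i ∈ univ, a i) ^ 2 = ∑ i ∈ univ, ∑ j ∈ univ, a i * a j := by
          rw [sq, Finset.sum_mul_sum]
      _ = ∑ i ∈ univ, ((a i) ^ 2 + esf f univ (k + 1) * esf f (univ.erase i) (k - 1)) := by
          refine Finset.sum_congr rfl fun i _ => ?_
          calc ∑ j ∈ univ, a i * a j
              = a i * a i + ∑ j ∈ univ.erase i, a i * a j :=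
                (Finset.add_sum_erase _ _ (Finset.mem_univ i)).symm
            _ = (a i) ^ 2 + esf f univ (k + 1) *
                  ∑ j ∈ univ.erase i, ∏ x ∈ (univ.erase i).erase j, f x := by
                rw [sq, htopdeg, Finset.mul_sum]
                congr 1
                exact Finset.sum_congr rfl fun j hj => by
                  rw [hprod i j (Finset.mem_erase.1 hj).1]
            _ = (a i) ^ 2 + esf f univ (k + 1) * esf f (univ.erase i) (k - 1) := by
                rw [herasetop i]
      _ = (∑ i ∈ univ, (a i) ^ 2) + esf f univ (k + 1) * (2 * esf f univ (k - 1)) := by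
          rw [Finset.sum_add_distrib, ← Finset.mul_sum, hsum2]
  -- Cauchy-Schwarz
  have hcs : (∑ i ∈ univ, a i) ^ 2 ≤ ((k : ℝ) + 1) * ∑ i ∈ univ, (a i) ^ 2 := by
    have := sq_sum_le_card_mul_sum_sq (s := (univ : Finset (Fin m))) (f := a)
    rwa [hcard, Nat.cast_add, Nat.cast_one] at this
  rw [hek]
  nlinarith [hexp, hcs]

end NewtonAux

namespace NewtonAux

open Polynomial

lemma esymm_coe_list (l : List ℝ) (j : ℕ) :
    (↑l : Multiset ℝ).esymm j = esf l.get univ j := by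
  have h1 : (univ : Finset (Fin l.length)).val.map l.get = (↑l : Multiset ℝ) := by
    rw [Fin.univ_def]
    show Multiset.map l.get (↑(List.finRange l.length)) = _
    rw [Multiset.map_coe, List.map_get_finRange]
  rw [← h1, Finset.esymm_map_val]
  rfl

lemma multiset_top_newton (ν : Multiset ℝ) (k : ℕ) (hk : 1 ≤ k) (hcard : Multiset.card ν = k + 1) :
    2 * ((k : ℝ) + 1) * (ν.esymm (k - 1) * ν.esymm (k + 1)) ≤ (k : ℝ) * (ν.esymm k) ^ 2 := by
  have hl : ν.toList.length = k + 1 := by rw [Multiset.length_toList, hcard]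
  have hν : ν = ↑ν.toList := (Multiset.coe_toList ν).symm
  rw [hν, esymm_coe_list, esymm_coe_list, esymm_coe_list]
  exact top_newton hk hl ν.toList.get

/-- One derivative preserves "all roots real". -/
lemma deriv_real_rooted {p : ℝ[X]} (h : Multiset.card p.roots = p.natDegree) :
    Multiset.card (derivative p).roots = (derivative p).natDegree ∧
    (derivative p).natDegree = p.natDegree - 1 := by
  have h1 : (derivative p).natDegree ≤ p.natDegree - 1 := natDegree_derivative_le p
  have h2 : p.natDegree - 1 ≤ Multiset.card (derivative p).roots := by
    have := p.card_roots_le_derivative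
    omega
  have h3 : Multiset.card (derivative p).roots ≤ (derivative p).natDegree :=
    (derivative p).card_roots'
  omega

lemma iterate_deriv_real_rooted {p : ℝ[X]} (h : Multiset.card p.roots = p.natDegree) (d : ℕ) :
    Multiset.card (derivative^[d] p).roots = (derivative^[d] p).natDegree ∧
    (derivative^[d] p).natDegree = p.natDegree - d := by
  induction d with
  | zero => exact ⟨h, rfl⟩
  | succ d ih =>
    rw [Function.iterate_succ_apply']
    obtain ⟨ih1, ih2⟩ := ih
    obtain ⟨h1, h2⟩ := deriv_real_rooted ih1
    exact ⟨h1, by omega⟩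

end NewtonAux

namespace NewtonAux

open Polynomial

lemma esymm_zero' (μ : Multiset ℝ) : μ.esymm 0 = 1 := by
  simp [Multiset.esymm]

lemma newton_desc (μ : Multiset ℝ) (k d : ℕ) (hk : 1 ≤ k) (hcard : Multiset.card μ = k + 1 + d) :
    2 * ((k : ℝ) + 1) * ((d.descFactorial d : ℝ) * (((d + 2).descFactorial d : ℕ) : ℝ)) *
      (μ.esymm (k - 1) * μ.esymm (k + 1)) ≤
    (k : ℝ) * ((((d + 1).descFactorial d : ℕ) : ℝ)) ^ 2 * (μ.esymm k) ^ 2 := by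
  classical
  set m := k + 1 + d with hm
  set p : ℝ[X] := (μ.map fun r => X + C r).prod with hp
  have hmonic : p.Monic := monic_multiset_prod_of_monic _ _ fun r _ => monic_X_add_C r
  have hdeg : p.natDegree = m := by
    rw [hp, natDegree_multiset_prod_of_monic _ (fun f hf => by
      obtain ⟨r, _, rfl⟩ := Multiset.mem_map.1 hf; exact monic_X_add_C r)]
    simp [Multiset.map_map, natDegree_X_add_C, ← hcard]
  have hp2 : p = ((μ.map fun r => -r).map fun r => X - C r).prod := by
    rw [Multiset.map_map]
    exact congrArg _ (Multiset.map_congr rfl fun x _ => by simp [sub_neg_eq_add])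
  have hroots : Multiset.card p.roots = p.natDegree := by
    rw [hp2, roots_multiset_prod_X_sub_C, Multiset.card_map, hcard, ← hp2, hdeg]
  have hcoeff : ∀ j, j ≤ m → p.coeff j = μ.esymm (m - j) := by
    intro j hj
    rw [hp, Multiset.prod_X_add_C_coeff μ (by omega : j ≤ Multiset.card μ), hcard]
  set q : ℝ[X] := derivative^[d] p with hq
  obtain ⟨hq1, hq2⟩ := iterate_deriv_real_rooted hroots d
  rw [hdeg] at hq2
  have hq2' : q.natDegree = k + 1 := by rw [hq, hq2]; omega
  have hq1' : Multiset.card q.roots = k + 1 := by rw [hq, hq1, ← hq]; exact hq2'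
  have hqc : ∀ j, j ≤ k + 1 → q.coeff j = ((j + d).descFactorial d : ℝ) * μ.esymm (k + 1 - j) := by
    intro j hj
    rw [hq, coeff_iterate_derivative, nsmul_eq_mul, hcoeff (j + d) (by omega)]
    have : m - (j + d) = k + 1 - j := by omega
    rw [this]
  have hlc : q.leadingCoeff = ((m.descFactorial d : ℕ) : ℝ) := by
    rw [leadingCoeff, hq2', hqc (k + 1) le_rfl]
    have : k + 1 - (k + 1) = 0 := by omega
    rw [this, esymm_zero', mul_one]
  have hsplits : Splits q := (splits_iff_card_roots).2 (by rw [hq1', hq2'])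
  have hfact : q = C q.leadingCoeff * (q.roots.map fun a => X - C a).prod :=
    hsplits.eq_prod_roots
  set ν : Multiset ℝ := q.roots.map (fun r => -r) with hν
  have hνcard : Multiset.card ν = k + 1 := by rw [hν, Multiset.card_map, hq1']
  have hprodeq : (q.roots.map fun a => X - C a).prod = (ν.map fun r => X + C r).prod := by
    rw [hν, Multiset.map_map]
    exact congrArg _ (Multiset.map_congr rfl fun x _ => by simp [sub_eq_add_neg])
  have hcoeff2 : ∀ j, j ≤ k + 1 → q.coeff j = q.leadingCoeff * ν.esymm (k + 1 - j) := by
    intro j hj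
    conv_lhs => rw [hfact]
    rw [coeff_C_mul, hprodeq, Multiset.prod_X_add_C_coeff ν (by omega : j ≤ Multiset.card ν),
      hνcard]
  have hkey : ∀ j, j ≤ k + 1 →
      ((m.descFactorial d : ℕ) : ℝ) * ν.esymm (k + 1 - j) =
        ((j + d).descFactorial d : ℝ) * μ.esymm (k + 1 - j) := by
    intro j hj
    rw [← hlc, ← hcoeff2 j hj, hqc j hj]
  have e1 := hkey 0 (by omega)
  have e2 := hkey 1 (by omega)
  have e3 := hkey 2 (by omega)
  rw [show k + 1 - 0 = k + 1 by omega, show (0 : ℕ) + d = d by omega] at e1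
  rw [show k + 1 - 1 = k by omega, show (1 : ℕ) + d = d + 1 by omega] at e2
  rw [show k + 1 - 2 = k - 1 by omega, show (2 : ℕ) + d = d + 2 by omega] at e3
  have hT := multiset_top_newton ν k hk hνcard
  have hlcpos : (0 : ℝ) < ((m.descFactorial d : ℕ) : ℝ) := by
    have : 0 < m.descFactorial d :=
      Nat.pos_of_ne_zero fun h => by have := Nat.descFactorial_eq_zero_iff_lt.1 h; omega
    exact_mod_cast this
  set L : ℝ := ((m.descFactorial d : ℕ) : ℝ) with hL
  have key : 2 * ((k : ℝ) + 1) * ((L * ν.esymm (k - 1)) * (L * ν.esymm (k + 1))) ≤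
      (k : ℝ) * (L * ν.esymm k) ^ 2 := by nlinarith [hT, sq_nonneg L, mul_pos hlcpos hlcpos]
  rw [e1, e2, e3] at key
  nlinarith [key]

end NewtonAux

namespace NewtonAux

lemma descFac1 (d : ℕ) : (d + 1).descFactorial d = (d + 1).factorial := by
  have h := Nat.descFactorial_self (d + 1)
  rw [Nat.descFactorial_succ] at h
  simpa using h

lemma descFac2 (d : ℕ) : 2 * ((d + 2).descFactorial d) = (d + 2).factorial := by
  have h := Nat.descFactorial_self (d + 2)
  rw [Nat.descFactorial_succ, Nat.descFactorial_succ] at h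
  have e1 : d + 2 - (d + 1) = 1 := by omega
  have e2 : d + 2 - d = 2 := by omega
  rw [e1, e2, one_mul] at h
  exact h

lemma coeff_ineq (j d : ℕ) :
    j * ((d + 1).descFactorial d) ^ 2 ≤
      2 * (j + 1) * (d.descFactorial d * (d + 2).descFactorial d) := by
  have h : 2 * (j + 1) * (d.descFactorial d * (d + 2).descFactorial d) =
      (j + 1) * (d.factorial * (d + 2).factorial) := by
    rw [Nat.descFactorial_self, ← descFac2 d]; ring
  rw [h, descFac1]
  calc j * ((d + 1).factorial) ^ 2
      = (j * (d + 1)) * (d.factorial * (d + 1).factorial) := by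
        rw [sq, Nat.factorial_succ]; ring
    _ ≤ ((j + 1) * (d + 2)) * (d.factorial * (d + 1).factorial) :=
        Nat.mul_le_mul_right _ (Nat.mul_le_mul (Nat.le_succ j) (by omega))
    _ = (j + 1) * (d.factorial * (d + 2).factorial) := by
        rw [Nat.factorial_succ (d + 1)]; ring

lemma newton_raw (μ : Multiset ℝ) (j : ℕ) (hj : 1 ≤ j) (hjm : j + 1 ≤ Multiset.card μ)
    (hsign : 0 ≤ μ.esymm (j - 1) * μ.esymm (j + 1)) :
    μ.esymm (j - 1) * μ.esymm (j + 1) ≤ (μ.esymm j) ^ 2 := by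
  set d := Multiset.card μ - (j + 1) with hd
  have hcard : Multiset.card μ = j + 1 + d := by omega
  have hdesc := newton_desc μ j d hj hcard
  set X := μ.esymm (j - 1) * μ.esymm (j + 1) with hX
  set Y := (μ.esymm j) ^ 2 with hY
  set D0 : ℝ := (d.descFactorial d : ℝ)
  set D1 : ℝ := ((d + 1).descFactorial d : ℝ)
  set D2 : ℝ := ((d + 2).descFactorial d : ℝ)
  have hBA : (j : ℝ) * D1 ^ 2 ≤ 2 * ((j : ℝ) + 1) * (D0 * D2) := by
    have := coeff_ineq j d
    have h2 : ((j * ((d + 1).descFactorial d) ^ 2 : ℕ) : ℝ) ≤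
        ((2 * (j + 1) * (d.descFactorial d * (d + 2).descFactorial d) : ℕ) : ℝ) := by
      exact_mod_cast this
    push_cast at h2
    convert h2 using 1 <;> ring
  have hBpos : (0 : ℝ) < (j : ℝ) * D1 ^ 2 := by
    have h1 : 0 < (d + 1).descFactorial d := by
      refine Nat.pos_of_ne_zero fun h => ?_
      have := Nat.descFactorial_eq_zero_iff_lt.1 h; omega
    have : (0 : ℝ) < D1 := by
      show (0 : ℝ) < (((d + 1).descFactorial d : ℕ) : ℝ); exact_mod_cast h1
    have : (0 : ℝ) < (j : ℝ) := by exact_mod_cast hj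
    positivity
  have step1 : (j : ℝ) * D1 ^ 2 * X ≤ 2 * ((j : ℝ) + 1) * (D0 * D2) * X :=
    mul_le_mul_of_nonneg_right hBA hsign
  have step2 : 2 * ((j : ℝ) + 1) * (D0 * D2) * X ≤ (j : ℝ) * D1 ^ 2 * Y := by
    calc 2 * ((j : ℝ) + 1) * (D0 * D2) * X
        = 2 * ((j : ℝ) + 1) * (D0 * D2) * (μ.esymm (j - 1) * μ.esymm (j + 1)) := by rw [hX]
      _ ≤ (j : ℝ) * D1 ^ 2 * (μ.esymm j) ^ 2 := hdesc
      _ = (j : ℝ) * D1 ^ 2 * Y := by rw [hY]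
  have := le_trans step1 step2
  exact le_of_mul_le_mul_left (by linarith [this]) hBpos

lemma newton_C (μ : Multiset ℝ) (j d : ℕ) (hj : 1 ≤ j) (hm : Multiset.card μ = j + 1 + d) :
    μ.esymm (j - 1) * μ.esymm (j + 1) * (((Multiset.card μ).choose j : ℝ)) ^ 2 ≤
      (μ.esymm j) ^ 2 *
        (((Multiset.card μ).choose (j - 1) : ℝ) * ((Multiset.card μ).choose (j + 1) : ℝ)) := by
  set m := Multiset.card μ with hmm
  have hdesc := newton_desc μ j d hj hm
  set X := μ.esymm (j - 1) * μ.esymm (j + 1) with hX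
  set Y := (μ.esymm j) ^ 2 with hY
  set W : ℝ := (d.factorial : ℝ) * ((d + 1).factorial : ℝ) with hW
  have hWpos : (0 : ℝ) < W := by
    have h1 : (0:ℝ) < (d.factorial : ℝ) := by exact_mod_cast d.factorial_pos
    have h2 : (0:ℝ) < ((d+1).factorial : ℝ) := by exact_mod_cast (d+1).factorial_pos
    positivity
  -- rewrite coefficients
  have hA : 2 * ((j : ℝ) + 1) * ((d.descFactorial d : ℝ) * ((d + 2).descFactorial d : ℝ)) =
      ((j : ℝ) + 1) * ((d : ℝ) + 2) * W := by
    have h2 : ((d + 2).factorial : ℝ) = 2 * ((d + 2).descFactorial d : ℝ) := by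
      exact_mod_cast (descFac2 d).symm
    have h3 : ((d + 2).factorial : ℝ) = ((d : ℝ) + 2) * ((d + 1).factorial : ℝ) := by
      rw [Nat.factorial_succ (d + 1)]; push_cast; ring
    have h0 : ((d.descFactorial d : ℕ) : ℝ) = (d.factorial : ℝ) := by
      rw [Nat.descFactorial_self]
    rw [hW, h0]
    linear_combination ((j : ℝ) + 1) * (d.factorial : ℝ) * (h3 - h2)
  have hB : (j : ℝ) * ((d + 1).descFactorial d : ℝ) ^ 2 = (j : ℝ) * ((d : ℝ) + 1) * W := by
    have h1 : (((d + 1).descFactorial d : ℕ) : ℝ) = ((d + 1).factorial : ℝ) := by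
      rw [descFac1]
    have h3 : ((d + 1).factorial : ℝ) = ((d : ℝ) + 1) * (d.factorial : ℝ) := by
      rw [Nat.factorial_succ d]; push_cast; ring
    rw [h1, hW]
    linear_combination (j : ℝ) * ((d + 1).factorial : ℝ) * h3
  have hAB : ((j : ℝ) + 1) * ((d : ℝ) + 2) * W * X ≤ (j : ℝ) * ((d : ℝ) + 1) * W * Y := by
    calc ((j : ℝ) + 1) * ((d : ℝ) + 2) * W * X
        = 2 * ((j : ℝ) + 1) * ((d.descFactorial d : ℝ) * ((d + 2).descFactorial d : ℝ)) * X := by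
          rw [hA]
      _ ≤ (j : ℝ) * ((d + 1).descFactorial d : ℝ) ^ 2 * Y := hdesc
      _ = (j : ℝ) * ((d : ℝ) + 1) * W * Y := by rw [hB]
  have hAB' : ((j : ℝ) + 1) * ((d : ℝ) + 2) * X ≤ (j : ℝ) * ((d : ℝ) + 1) * Y := by
    have h := hAB
    have e1 : ((j : ℝ) + 1) * ((d : ℝ) + 2) * W * X = (((j : ℝ) + 1) * ((d : ℝ) + 2) * X) * W := by
      ring
    have e2 : (j : ℝ) * ((d : ℝ) + 1) * W * Y = ((j : ℝ) * ((d : ℝ) + 1) * Y) * W := by ring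
    rw [e1, e2] at h
    exact le_of_mul_le_mul_right h hWpos
  -- choose identities
  have h1R : ((m.choose (j + 1) : ℝ)) * ((j : ℝ) + 1) = (m.choose j : ℝ) * ((d : ℝ) + 1) := by
    have := Nat.choose_succ_right_eq m j
    have hmj : m - j = d + 1 := by omega
    rw [hmj] at this
    exact_mod_cast this
  have h2R : ((m.choose j : ℝ)) * (j : ℝ) = (m.choose (j - 1) : ℝ) * ((d : ℝ) + 2) := by
    have := Nat.choose_succ_right_eq m (j - 1)
    have hj1 : j - 1 + 1 = j := by omega
    have hmj : m - (j - 1) = d + 2 := by omega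
    rw [hj1, hmj] at this
    exact_mod_cast this
  have hid : ((m.choose (j - 1) : ℝ) * (m.choose (j + 1) : ℝ)) * (((j : ℝ) + 1) * ((d : ℝ) + 2)) =
      ((m.choose j : ℝ)) ^ 2 * ((j : ℝ) * ((d : ℝ) + 1)) := by
    linear_combination (((d : ℝ) + 2) * (m.choose (j - 1) : ℝ)) * h1R -
      ((m.choose j : ℝ) * ((d : ℝ) + 1)) * h2R
  have hCpos : (0 : ℝ) < (j : ℝ) * ((d : ℝ) + 1) := by
    have : (0:ℝ) < (j:ℝ) := by exact_mod_cast hj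
    positivity
  have hCC : (0 : ℝ) ≤ (m.choose (j - 1) : ℝ) * (m.choose (j + 1) : ℝ) := by positivity
  have step : (((m.choose j : ℝ)) ^ 2 * X) * ((j : ℝ) * ((d : ℝ) + 1)) ≤
      ((m.choose (j - 1) : ℝ) * (m.choose (j + 1) : ℝ) * Y) * ((j : ℝ) * ((d : ℝ) + 1)) := by
    have h := mul_le_mul_of_nonneg_left hAB' hCC
    calc (((m.choose j : ℝ)) ^ 2 * X) * ((j : ℝ) * ((d : ℝ) + 1))
        = ((m.choose (j - 1) : ℝ) * (m.choose (j + 1) : ℝ)) *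
            (((j : ℝ) + 1) * ((d : ℝ) + 2) * X) := by
          linear_combination X * hid.symm
      _ ≤ ((m.choose (j - 1) : ℝ) * (m.choose (j + 1) : ℝ)) *
            ((j : ℝ) * ((d : ℝ) + 1) * Y) := h
      _ = ((m.choose (j - 1) : ℝ) * (m.choose (j + 1) : ℝ) * Y) * ((j : ℝ) * ((d : ℝ) + 1)) := by
          ring
  have := le_of_mul_le_mul_right step hCpos
  calc X * ((m.choose j : ℝ)) ^ 2 = ((m.choose j : ℝ)) ^ 2 * X := by ring
    _ ≤ (m.choose (j - 1) : ℝ) * (m.choose (j + 1) : ℝ) * Y := this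
    _ = Y * ((m.choose (j - 1) : ℝ) * (m.choose (j + 1) : ℝ)) := by ring

end NewtonAux

namespace NewtonAux

lemma choose_strict (m K l : ℕ) (hl : 1 ≤ l) (hlK : l < K) (hKm : K ≤ m) :
    ((m.choose K : ℝ)) * (m.choose (l - 1) : ℝ) < (m.choose (K - 1) : ℝ) * (m.choose l : ℝ) := by
  have h1 : ((m.choose K : ℝ)) * (K : ℝ) = (m.choose (K - 1) : ℝ) * ((m - K + 1 : ℕ) : ℝ) := by
    have := Nat.choose_succ_right_eq m (K - 1)
    have e1 : K - 1 + 1 = K := by omega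
    have e2 : m - (K - 1) = m - K + 1 := by omega
    rw [e1, e2] at this
    exact_mod_cast this
  have h2 : ((m.choose l : ℝ)) * (l : ℝ) = (m.choose (l - 1) : ℝ) * ((m - l + 1 : ℕ) : ℝ) := by
    have := Nat.choose_succ_right_eq m (l - 1)
    have e1 : l - 1 + 1 = l := by omega
    have e2 : m - (l - 1) = m - l + 1 := by omega
    rw [e1, e2] at this
    exact_mod_cast this
  have hid : ((m.choose K : ℝ) * (m.choose (l - 1) : ℝ)) * ((K : ℝ) * ((m - l + 1 : ℕ) : ℝ)) =
      ((m.choose (K - 1) : ℝ) * (m.choose l : ℝ)) * ((l : ℝ) * ((m - K + 1 : ℕ) : ℝ)) := by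
    linear_combination ((m.choose (l - 1) : ℝ) * ((m - l + 1 : ℕ) : ℝ)) * h1 -
      ((m.choose (K - 1) : ℝ) * ((m - K + 1 : ℕ) : ℝ)) * h2
  have hnat : (l : ℝ) * ((m - K + 1 : ℕ) : ℝ) < (K : ℝ) * ((m - l + 1 : ℕ) : ℝ) := by
    have h : l * (m - K + 1) < K * (m - l + 1) := by
      calc l * (m - K + 1) < K * (m - K + 1) :=
            Nat.mul_lt_mul_of_lt_of_le hlK (le_refl _) (by omega)
        _ ≤ K * (m - l + 1) := Nat.mul_le_mul_left _ (by omega)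
    exact_mod_cast h
  have hpos : (0 : ℝ) < (m.choose (K - 1) : ℝ) * (m.choose l : ℝ) := by
    have p : 0 < m.choose (K - 1) * m.choose l :=
      Nat.mul_pos (Nat.choose_pos (by omega)) (Nat.choose_pos (by omega))
    exact_mod_cast p
  have hKpos : (0 : ℝ) < (K : ℝ) * ((m - l + 1 : ℕ) : ℝ) := by
    have p : 0 < K * (m - l + 1) := Nat.mul_pos (by omega) (by omega)
    exact_mod_cast p
  have hlt : ((m.choose K : ℝ) * (m.choose (l - 1) : ℝ)) * ((K : ℝ) * ((m - l + 1 : ℕ) : ℝ)) <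
      ((m.choose (K - 1) : ℝ) * (m.choose l : ℝ)) * ((K : ℝ) * ((m - l + 1 : ℕ) : ℝ)) := by
    rw [hid]
    exact mul_lt_mul_of_pos_left hnat hpos
  exact lt_of_mul_lt_mul_right hlt (le_of_lt hKpos)

end NewtonAux

namespace NewtonAux

lemma maclaurin (μ : Multiset ℝ) (K l : ℕ) (hl : 1 ≤ l) (hlK : l < K)
    (hKm : K ≤ Multiset.card μ) (hpos : ∀ j, j ≤ K → 0 < μ.esymm j) :
    μ.esymm K * μ.esymm (l - 1) < μ.esymm (K - 1) * μ.esymm l := by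
  set m := Multiset.card μ with hm
  have hCpos : ∀ j, j ≤ m → (0 : ℝ) < (m.choose j : ℝ) := fun j hj => by
    exact_mod_cast Nat.choose_pos hj
  -- the nonstrict chain P(j) for l ≤ j ≤ K
  have chain : ∀ j, l ≤ j → j ≤ K →
      μ.esymm j * μ.esymm (l - 1) * ((m.choose (j - 1) : ℝ) * (m.choose l : ℝ)) ≤
        μ.esymm (j - 1) * μ.esymm l * ((m.choose j : ℝ) * (m.choose (l - 1) : ℝ)) := by
    intro j hlj hjK
    induction j with
    | zero => omega
    | succ j ih =>
      rcases Nat.lt_or_ge l (j + 1) with hlt | hge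
      · -- use ih at j and newton at j
        have hlj' : l ≤ j := by omega
        have hjK' : j ≤ K := by omega
        have hP := ih hlj' hjK'
        have hj1 : 1 ≤ j := by omega
        have hd : m = j + 1 + (m - j - 1) := by omega
        have hN := newton_C μ j (m - j - 1) hj1 hd
        rw [← hm] at hN
        -- positivity facts
        have s0 : 0 < μ.esymm (j - 1) := hpos _ (by omega)
        have s1 : 0 < μ.esymm j := hpos _ (by omega)
        have s2 : 0 < μ.esymm (j + 1) := hpos _ (by omega)
        have sl : 0 < μ.esymm l := hpos _ (by omega)
        have sl0 : 0 < μ.esymm (l - 1) := hpos _ (by omega)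
        have c0 := hCpos (j - 1) (by omega)
        have c1 := hCpos j (by omega)
        have c2 := hCpos (j + 1) (by omega)
        have cl := hCpos l (by omega)
        have cl0 := hCpos (l - 1) (by omega)
        have hmul := mul_le_mul hP hN
          (by positivity) (by positivity)
        -- cancel the common positive factor
        have hF : (0 : ℝ) < μ.esymm (j - 1) * μ.esymm j *
            ((m.choose (j - 1) : ℝ) * (m.choose j : ℝ)) := by positivity
        have e1 : μ.esymm j * μ.esymm (l - 1) * ((m.choose (j - 1) : ℝ) * (m.choose l : ℝ)) *
              (μ.esymm (j - 1) * μ.esymm (j + 1) * ((m.choose j : ℝ)) ^ 2) =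
            μ.esymm (j + 1) * μ.esymm (l - 1) *
              ((m.choose j : ℝ) * (m.choose l : ℝ)) *
              (μ.esymm (j - 1) * μ.esymm j *
                ((m.choose (j - 1) : ℝ) * (m.choose j : ℝ))) := by ring
        have e2 : μ.esymm (j - 1) * μ.esymm l * ((m.choose j : ℝ) * (m.choose (l - 1) : ℝ)) *
              ((μ.esymm j) ^ 2 * ((m.choose (j - 1) : ℝ) * (m.choose (j + 1) : ℝ))) =
            μ.esymm j * μ.esymm l *
              ((m.choose (j + 1) : ℝ) * (m.choose (l - 1) : ℝ)) *
              (μ.esymm (j - 1) * μ.esymm j *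
                ((m.choose (j - 1) : ℝ) * (m.choose j : ℝ))) := by ring
        rw [e1, e2] at hmul
        have := le_of_mul_le_mul_right hmul hF
        simpa [Nat.add_sub_cancel] using this
      · -- base case j + 1 = l
        have : j + 1 = l := by omega
        rw [this]
        have comm : μ.esymm l * μ.esymm (l - 1) * ((m.choose (l - 1) : ℝ) * (m.choose l : ℝ)) =
            μ.esymm (l - 1) * μ.esymm l * ((m.choose l : ℝ) * (m.choose (l - 1) : ℝ)) := by ring
        exact le_of_eq comm
  have hPK := chain K (le_of_lt hlK) (le_refl K)
  have hstrict := choose_strict m K l hl hlK hKm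
  have sK1 : 0 < μ.esymm (K - 1) := hpos _ (by omega)
  have sl : 0 < μ.esymm l := hpos _ (by omega)
  have hCKl : (0 : ℝ) < (m.choose (K - 1) : ℝ) * (m.choose l : ℝ) :=
    mul_pos (hCpos _ (by omega)) (hCpos _ (by omega))
  have step : μ.esymm K * μ.esymm (l - 1) * ((m.choose (K - 1) : ℝ) * (m.choose l : ℝ)) <
      μ.esymm (K - 1) * μ.esymm l * ((m.choose (K - 1) : ℝ) * (m.choose l : ℝ)) := by
    calc μ.esymm K * μ.esymm (l - 1) * ((m.choose (K - 1) : ℝ) * (m.choose l : ℝ))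
        ≤ μ.esymm (K - 1) * μ.esymm l * ((m.choose K : ℝ) * (m.choose (l - 1) : ℝ)) := hPK
      _ < μ.esymm (K - 1) * μ.esymm l * ((m.choose (K - 1) : ℝ) * (m.choose l : ℝ)) := by
          exact mul_lt_mul_of_pos_left hstrict (mul_pos sK1 sl)
  exact lt_of_mul_lt_mul_right step (le_of_lt hCKl)

end NewtonAux

namespace NewtonAux

lemma esf_eq_esymm {α : Type*} [DecidableEq α] (f : α → ℝ) (A : Finset α) (j : ℕ) :
    esf f A j = (A.val.map f).esymm j :=
  (Finset.esymm_map_val f A j).symm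

end NewtonAux

open NewtonAux in
/-- restriction: `λ ∈ Γ_k` implies all `σ_j(λ|i) > 0` for `j ≤ k - 1`. -/
lemma garding_restrict (n : ℕ) : ∀ (k : ℕ), 1 ≤ k → k ≤ n → ∀ (lam : Fin n → ℝ),
    lam ∈ gardingCone n k → ∀ (i : Fin n) (j : ℕ), j ≤ k - 1 →
    0 < esf lam (Finset.univ.erase i) j := by
  intro k
  induction k with
  | zero => omega
  | succ K ih =>
    intro _ hkn lam hlam i j hj
    have hcardA : (Finset.univ.erase i).card = n - 1 := by
      rw [Finset.card_erase_of_mem (Finset.mem_univ i), Finset.card_univ, Fintype.card_fin]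
    rcases Nat.eq_zero_or_pos K with rfl | hK
    · -- K = 0 : j = 0
      have : j = 0 := by omega
      rw [this, esf_zero]
      norm_num
    · -- K ≥ 1
      have hlamK : lam ∈ gardingCone n K := fun i' h1 h2 => hlam i' h1 (by omega)
      have hIH := ih hK (by omega) lam hlamK i
      rcases Nat.lt_or_ge j K with hjK | hjK
      · exact hIH j (by omega)
      · have hjeq : j = K := by omega
        rw [hjeq]
        -- main argument
        obtain ⟨K₀, rfl⟩ : ∃ K₀, K = K₀ + 1 := ⟨K - 1, by omega⟩
        by_contra hcon
        push_neg at hcon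
        set A := Finset.univ.erase i with hA
        set sm := esf lam A K₀ with hsm
        set sK := esf lam A (K₀ + 1) with hsK
        set sp := esf lam A (K₀ + 2) with hsp
        have hsm_pos : 0 < sm := hIH K₀ (by omega)
        have hdec1 : esymm n (K₀ + 1) lam = sK + lam i * sm := by
          show esf lam Finset.univ (K₀ + 1) = _
          rw [esf_succ_of_mem lam (Finset.mem_univ i) K₀]
        have hdec2 : esymm n (K₀ + 2) lam = sp + lam i * sK := by
          show esf lam Finset.univ (K₀ + 2) = _
          rw [esf_succ_of_mem lam (Finset.mem_univ i) (K₀ + 1)]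
        have hg1 : 0 < esymm n (K₀ + 1) lam := hlam (K₀ + 1) (by omega) (by omega)
        have hg2 : 0 < esymm n (K₀ + 2) lam := hlam (K₀ + 2) (by omega) (by omega)
        rw [hdec1] at hg1
        rw [hdec2] at hg2
        -- from hcon : sK ≤ 0
        have hti : 0 < lam i * sm := by nlinarith
        have htpos : 0 < lam i := by
          by_contra hle
          push_neg at hle
          nlinarith
        have hsp_pos : 0 < sp := by
          nlinarith [mul_nonneg htpos.le (neg_nonneg.2 hcon)]
        set mu : Multiset ℝ := A.val.map lam with hmu
        have hmucard : Multiset.card mu = n - 1 := by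
          rw [hmu, Multiset.card_map]
          exact hcardA
        have hbr : ∀ j', mu.esymm j' = esf lam A j' := fun j' => (esf_eq_esymm lam A j').symm
        rcases Nat.lt_or_ge (n - 1) (K₀ + 2) with hsmall | hbig
        · -- degree too big: sp = 0
          have : sp = 0 := esf_of_gt (by omega : A.card < K₀ + 2)
          exact absurd this (ne_of_gt hsp_pos)
        · have hraw := newton_raw mu (K₀ + 1) (by omega) (by omega)
            (by rw [show K₀ + 1 - 1 = K₀ by omega, hbr, hbr]
                exact mul_nonneg hsm_pos.le hsp_pos.le)
          rw [show K₀ + 1 - 1 = K₀ by omega, hbr, hbr, hbr] at hraw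
          have p1 : sm * (lam i * (-sK)) < sm * sp :=
            mul_lt_mul_of_pos_left (by nlinarith) hsm_pos
          have p2 : (-sK) * (-sK) ≤ (lam i * sm) * (-sK) :=
            mul_le_mul_of_nonneg_right (by nlinarith) (by linarith)
          nlinarith [hraw, p1, p2]

open NewtonAux in
/-- For `λ ∈ Γ_k` and `n ≥ k > l ≥ 0`, the partial derivative
`∂/∂λ_i [σ_k(λ)/σ_l(λ)]` is strictly positive for every `i`. -/
theorem stmt6 (n k l : ℕ) (hkn : k ≤ n) (hlk : l < k)
    (lam : Fin n → ℝ) (hlam : lam ∈ gardingCone n k) (i : Fin n) :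
    ∃ d : ℝ, 0 < d ∧
      HasDerivAt (fun t : ℝ =>
        esymm n k (Function.update lam i t) / esymm n l (Function.update lam i t))
        d (lam i) := by
  classical
  obtain ⟨k₀, rfl⟩ : ∃ k₀, k = k₀ + 1 := ⟨k - 1, by omega⟩
  set A := Finset.univ.erase i with hA
  have hcardA : A.card = n - 1 := by
    rw [hA, Finset.card_erase_of_mem (Finset.mem_univ i), Finset.card_univ, Fintype.card_fin]
  set P := esf lam A (k₀ + 1) with hP
  set Q := esf lam A k₀ with hQ
  have hres := garding_restrict n (k₀ + 1) (by omega) hkn lam hlam i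
  have hupd : ∀ (t : ℝ) (j : ℕ), esf (Function.update lam i t) A j = esf lam A j := by
    intro t j
    refine esf_congr (fun x hx => ?_) j
    exact Function.update_of_ne (Finset.mem_erase.1 hx).1 t lam
  have hNfun : ∀ t : ℝ, esymm n (k₀ + 1) (Function.update lam i t) = P + t * Q := by
    intro t
    show esf (Function.update lam i t) Finset.univ (k₀ + 1) = _
    rw [esf_succ_of_mem _ (Finset.mem_univ i) k₀, Function.update_self, hupd, hupd]
  have hQpos : 0 < Q := hres k₀ (by omega)
  rcases Nat.eq_zero_or_pos l with rfl | hl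
  · -- l = 0 : denominator ≡ 1
    have hfun : (fun t : ℝ =>
        esymm n (k₀ + 1) (Function.update lam i t) / esymm n 0 (Function.update lam i t)) =
        fun t : ℝ => P + t * Q := by
      funext t
      have h0 : esymm n 0 (Function.update lam i t) = 1 := esf_zero _ _
      rw [h0, div_one, hNfun t]
    refine ⟨Q, hQpos, ?_⟩
    rw [hfun]
    exact (hasDerivAt_mul_const Q).const_add P
  · -- l ≥ 1
    obtain ⟨l₀, rfl⟩ : ∃ l₀, l = l₀ + 1 := ⟨l - 1, by omega⟩
    set R := esf lam A (l₀ + 1) with hR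
    set S := esf lam A l₀ with hS
    have hDfun : ∀ t : ℝ, esymm n (l₀ + 1) (Function.update lam i t) = R + t * S := by
      intro t
      show esf (Function.update lam i t) Finset.univ (l₀ + 1) = _
      rw [esf_succ_of_mem _ (Finset.mem_univ i) l₀, Function.update_self, hupd, hupd]
    have hDl : 0 < esymm n (l₀ + 1) lam := hlam (l₀ + 1) (by omega) (by omega)
    have hDx : R + lam i * S = esymm n (l₀ + 1) lam := by
      have := hDfun (lam i)
      rw [Function.update_eq_self] at this
      linarith [this]
    have hNx : P + lam i * Q = esymm n (k₀ + 1) lam := by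
      have := hNfun (lam i)
      rw [Function.update_eq_self] at this
      linarith [this]
    have hRpos : 0 < R := hres (l₀ + 1) (by omega)
    have hSpos : 0 < S := hres l₀ (by omega)
    -- key inequality QR > PS
    have hkey : P * S < Q * R := by
      rcases le_or_gt P 0 with hPle | hPpos
      · nlinarith
      · have hkn' : k₀ + 1 ≤ n - 1 := by
          by_contra hc
          push_neg at hc
          have : P = 0 := esf_of_gt (by omega : A.card < k₀ + 1)
          exact absurd this (ne_of_gt hPpos)
        set mu : Multiset ℝ := A.val.map lam with hmu
        have hmucard : Multiset.card mu = n - 1 := by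
          rw [hmu, Multiset.card_map]; exact hcardA
        have hbr : ∀ j', mu.esymm j' = esf lam A j' := fun j' => (esf_eq_esymm lam A j').symm
        have hpos : ∀ j, j ≤ k₀ + 1 → 0 < mu.esymm j := by
          intro j hj
          rw [hbr]
          rcases Nat.lt_or_ge j (k₀ + 1) with h | h
          · exact hres j (by omega)
          · have : j = k₀ + 1 := by omega
            rw [this]; exact hPpos
        have hmac := maclaurin mu (k₀ + 1) (l₀ + 1) (by omega) hlk (by omega) hpos
        rw [show k₀ + 1 - 1 = k₀ by omega, show l₀ + 1 - 1 = l₀ by omega,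
          hbr, hbr, hbr, hbr] at hmac
        exact hmac
    -- assemble the derivative
    set Dl := esymm n (l₀ + 1) lam with hDlv
    set Nk := esymm n (k₀ + 1) lam with hNkv
    have hfun : (fun t : ℝ =>
        esymm n (k₀ + 1) (Function.update lam i t) /
          esymm n (l₀ + 1) (Function.update lam i t)) =
        fun t : ℝ => (P + t * Q) / (R + t * S) := by
      funext t
      rw [hNfun t, hDfun t]
    have hnum : HasDerivAt (fun t : ℝ => P + t * Q) Q (lam i) :=
      (hasDerivAt_mul_const Q).const_add P
    have hden : HasDerivAt (fun t : ℝ => R + t * S) S (lam i) :=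
      (hasDerivAt_mul_const S).const_add R
    have hne : R + lam i * S ≠ 0 := by rw [hDx]; exact ne_of_gt hDl
    have hder := hnum.div hden hne
    refine ⟨(Q * (R + lam i * S) - (P + lam i * Q) * S) / (R + lam i * S) ^ 2, ?_, ?_⟩
    · have hnumval : Q * (R + lam i * S) - (P + lam i * Q) * S = Q * R - P * S := by ring
      rw [hnumval, hDx]
      exact div_pos (by linarith) (pow_pos hDl 2)
    · rw [hfun]
      exact hder
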